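/- If γ ≤ α and P = C + ((α − γ)/α) • (B − C) (the point of the segment [C,B] at distance α − γ from C), then dist A P = √( γ·(β + γ − α)·(α + β − γ)/α ). -/

import Mathlib

open scoped RealInnerProductSpace


/-- If `γ ≤ α` and `P` is the point of the segment `[C,B]` at distance `α − γ`
from `C`, then `dist A P = √(γ(β + γ − α)(α + β − γ)/α)`. -/
theorem stmt8 (A B C : EuclideanSpace ℝ (Fin 2)) (α β γ : ℝ)
    (hα : α = dist B C) (hβ : β = dist C A) (hγ : γ = dist A B)
    (hαpos : 0 < α) (hγpos : 0 < γ) (h : γ ≤ α)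
    (P : EuclideanSpace ℝ (Fin 2)) (hP : P = C + ((α - γ) / α) • (B - C)) :
    dist A P = Real.sqrt (γ * (β + γ - α) * (α + β - γ) / α) := by
  have hαne : α ≠ 0 := hαpos.ne'
  set t : ℝ := (α - γ) / α with ht
  set u : EuclideanSpace ℝ (Fin 2) := C - A with hu
  set v : EuclideanSpace ℝ (Fin 2) := B - C with hv
  have hβn : ‖u‖ = β := by rw [hu, hβ, dist_eq_norm]
  have hαn : ‖v‖ = α := by rw [hv, hα, dist_eq_norm]
  have hγn : ‖u + v‖ = γ := by
    have : u + v = B - A := by rw [hu, hv]; abel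
    rw [this, hγ, dist_eq_norm, norm_sub_rev]
  have hinner : (inner ℝ u v : ℝ) = (γ ^ 2 - β ^ 2 - α ^ 2) / 2 := by
    have hns := norm_add_sq_real u v
    rw [hγn, hβn, hαn] at hns
    linarith
  have hAP : A - P = -(u + t • v) := by
    rw [hP, hu, hv, ht]
    module
  have hsq : dist A P ^ 2 = β ^ 2 + 2 * t * ((γ ^ 2 - β ^ 2 - α ^ 2) / 2) + t ^ 2 * α ^ 2 := by
    rw [dist_eq_norm, hAP, norm_neg, norm_add_sq_real, hβn, inner_smul_right, hinner,
      norm_smul, Real.norm_eq_abs, hαn, mul_pow, sq_abs]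
    ring
  have hval : dist A P ^ 2 = γ * (β + γ - α) * (α + β - γ) / α := by
    rw [hsq, ht]
    field_simp
    ring
  rw [← hval, Real.sqrt_sq dist_nonneg]
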